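/- Let 1 ≤ p ≤ 2 and let (Ω, 𝓑, μ) be a measure space with a nonnegative measure μ. Then there exists a real Hilbert space H and a mapping S : L_p(μ) → H such that ‖S(f) − S(g)‖_H = ‖f − g‖_p^{p/2} for all f, g ∈ L_p(μ). -/

import Mathlib

open MeasureTheory Set
open scoped ENNReal

/-! Auxiliary material for the snowflake embedding of `L_p` into Hilbert space.
The construction: `S f = c • [(ω,t) ↦ (e^{i t f ω} - 1)·|t|^{-(1+p)/2}] ∈ L²(μ ⊗ λ; ℂ)`. -/

noncomputable def sKer (p a : ℝ) : ℝ≥0∞ :=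
  ∫⁻ t : ℝ, ENNReal.ofReal ((1 - Real.cos (a * t)) * |t| ^ (-(1 + p)))

lemma sKer_scale {p : ℝ} (hp : 0 < p) (a : ℝ) :
    sKer p a = ENNReal.ofReal (|a| ^ p) * sKer p 1 := by
  rcases eq_or_ne a 0 with rfl | ha
  · simp [sKer, Real.zero_rpow hp.ne']
  · have hA : (0:ℝ) < |a| := abs_pos.mpr ha
    set G : ℝ → ℝ≥0∞ := fun s => ENNReal.ofReal ((1 - Real.cos s) * |s| ^ (-(1 + p))) with hG
    have hGmeas : Measurable G := by
      apply ENNReal.measurable_ofReal.comp; fun_prop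
    have key : ∀ t : ℝ, ENNReal.ofReal ((1 - Real.cos (a * t)) * |t| ^ (-(1 + p)))
        = ENNReal.ofReal (|a| ^ (1 + p)) * G (a * t) := by
      intro t
      rw [hG, ← ENNReal.ofReal_mul (by positivity)]
      congr 1
      rw [abs_mul, Real.mul_rpow (abs_nonneg a) (abs_nonneg t)]
      rw [show (1 - Real.cos (a*t)) * (|a| ^ (-(1+p)) * |t| ^ (-(1+p)))
          = (|a| ^ (-(1+p)) * |a| ^ (1+p)) * ((1 - Real.cos (a*t)) * |t| ^ (-(1+p))) / |a| ^ (1+p) by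
        field_simp]
      rw [← Real.rpow_add hA, neg_add_cancel, Real.rpow_zero, one_mul]
      field_simp
    have hmap : ∫⁻ t : ℝ, G (a * t) = ENNReal.ofReal |a⁻¹| * sKer p 1 := by
      have h1 : ∫⁻ t : ℝ, G (a * t) = ∫⁻ s, G s ∂(Measure.map (a * ·) volume) :=
        (lintegral_map hGmeas (measurable_const_mul a)).symm
      rw [h1, Real.map_volume_mul_left ha, lintegral_smul_measure]
      congr 1
      simp only [sKer, one_mul]
      rfl
    calc sKer p a = ∫⁻ t : ℝ, ENNReal.ofReal (|a| ^ (1 + p)) * G (a * t) := by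
          simp only [sKer]; exact lintegral_congr fun t => key t
      _ = ENNReal.ofReal (|a| ^ (1 + p)) * ∫⁻ t : ℝ, G (a * t) :=
          lintegral_const_mul _ (hGmeas.comp (measurable_const_mul a))
      _ = ENNReal.ofReal (|a| ^ (1 + p)) * (ENNReal.ofReal |a⁻¹| * sKer p 1) := by rw [hmap]
      _ = ENNReal.ofReal (|a| ^ p) * sKer p 1 := by
          rw [← mul_assoc, ← ENNReal.ofReal_mul (by positivity)]
          congr 2
          rw [abs_inv, Real.rpow_add hA, Real.rpow_one]
          field_simp

lemma integrableOn_comp_neg' {F : ℝ → ℝ} {s : Set ℝ} (h : IntegrableOn F s volume) :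
    IntegrableOn (fun t => F (-t)) (Neg.neg ⁻¹' s) volume :=
  (MeasurePreserving.integrableOn_comp_preimage (Measure.measurePreserving_neg _)
    (Homeomorph.neg ℝ).measurableEmbedding).2 h

lemma integrable_sker_integrand {p : ℝ} (hp1 : 1 ≤ p) (hp2 : p < 2) :
    Integrable (fun t : ℝ => (1 - Real.cos t) * |t| ^ (-(1 + p))) volume := by
  set F : ℝ → ℝ := fun t => (1 - Real.cos t) * |t| ^ (-(1 + p)) with hF
  have hFmeas : Measurable F := by fun_prop
  have hFeven : ∀ t, F (-t) = F t := by
    intro t; simp [hF, Real.cos_neg]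
  have hFnn : ∀ t, 0 ≤ F t := fun t =>
    mul_nonneg (by nlinarith [Real.cos_le_one t]) (Real.rpow_nonneg (abs_nonneg t) _)
  have htail : IntegrableOn F (Ioi 1) volume := by
    have hint : IntegrableOn (fun t : ℝ => 2 * t ^ (-(1 + p))) (Ioi 1) volume :=
      (integrableOn_Ioi_rpow_of_lt (by linarith) one_pos).const_mul 2
    refine hint.mono' (hFmeas.aestronglyMeasurable.restrict) ?_
    filter_upwards [ae_restrict_mem measurableSet_Ioi] with t ht
    have ht1 : (1:ℝ) < t := ht
    have habs : |t| = t := abs_of_pos (by linarith)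
    rw [Real.norm_of_nonneg (hFnn t), hF]
    simp only [habs]
    have : (1 - Real.cos t) ≤ 2 := by nlinarith [Real.neg_one_le_cos t]
    have hpow : (0:ℝ) ≤ t ^ (-(1+p)) := Real.rpow_nonneg (by linarith) _
    nlinarith
  have hmid : IntegrableOn F (Ioc 0 1) volume := by
    have hint : IntegrableOn (fun t : ℝ => t ^ (1 - p)) (Ioc 0 1) volume := by
      have := intervalIntegral.intervalIntegrable_rpow' (a := 0) (b := 1)
        (show (-1:ℝ) < 1 - p by linarith)
      rwa [intervalIntegrable_iff, uIoc_of_le zero_le_one] at this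
    refine hint.mono' (hFmeas.aestronglyMeasurable.restrict) ?_
    filter_upwards [ae_restrict_mem measurableSet_Ioc] with t ht
    obtain ⟨ht0, ht1⟩ := ht
    have habs : |t| = t := abs_of_pos ht0
    rw [Real.norm_of_nonneg (hFnn t), hF]
    simp only [habs]
    have hcos : 1 - Real.cos t ≤ t ^ 2 / 2 := by
      nlinarith [Real.one_sub_sq_div_two_le_cos (x := t)]
    have h2 : t ^ (2:ℕ) * t ^ (-(1+p)) = t ^ (1 - p) := by
      rw [← Real.rpow_natCast t 2, ← Real.rpow_add ht0]
      congr 1; ring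
    have hpow : (0:ℝ) ≤ t ^ (-(1+p)) := Real.rpow_nonneg ht0.le _
    calc (1 - Real.cos t) * t ^ (-(1+p)) ≤ (t^2/2) * t ^ (-(1+p)) := by
          apply mul_le_mul_of_nonneg_right hcos hpow
      _ ≤ t^(2:ℕ) * t ^ (-(1+p)) := by
          refine mul_le_mul_of_nonneg_right ?_ hpow
          nlinarith [sq_nonneg t]
      _ = t ^ (1-p) := h2
  have hneg1 : IntegrableOn F (Neg.neg ⁻¹' (Ioi 1)) volume := by
    have := integrableOn_comp_neg' htail
    simpa [hFeven] using this
  have hneg2 : IntegrableOn F (Neg.neg ⁻¹' (Ioc 0 1)) volume := by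
    have := integrableOn_comp_neg' hmid
    simpa [hFeven] using this
  have hzero : IntegrableOn F {0} volume := by
    apply (integrableOn_singleton_iff (by simp)).mpr; right
    exact Real.volume_singleton ▸ lt_top_iff_ne_top.mpr (by simp)
  have hcover : (univ : Set ℝ) ⊆ (Neg.neg ⁻¹' (Ioi 1)) ∪ ((Neg.neg ⁻¹' (Ioc 0 1)) ∪ ({0} ∪ (Ioc 0 1 ∪ Ioi 1))) := by
    intro t _
    simp only [mem_union, mem_preimage, mem_Ioi, mem_Ioc, mem_singleton_iff]
    rcases lt_trichotomy t 0 with h | h | h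
    · rcases lt_or_ge t (-1) with h1 | h1
      · left; linarith
      · right; left; constructor <;> [linarith; linarith]
    · right; right; left; exact h
    · rcases le_or_gt t 1 with h1 | h1
      · right; right; right; left; exact ⟨h, h1⟩
      · right; right; right; right; exact h1
  rw [← integrableOn_univ]
  exact ((hneg1.union (hneg2.union (hzero.union (hmid.union htail))))).mono_set hcover

lemma sKer_one_lt_top {p : ℝ} (hp1 : 1 ≤ p) (hp2 : p < 2) : sKer p 1 < ∞ := by
  have hInt := integrable_sker_integrand hp1 hp2
  have : sKer p 1 = ∫⁻ t : ℝ, ENNReal.ofReal ((1 - Real.cos t) * |t| ^ (-(1 + p))) := by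
    simp [sKer]
  rw [this]
  exact (lintegral_ofReal_le_lintegral_enorm _).trans_lt hInt.2

lemma sKer_one_pos {p : ℝ} (hp1 : 1 ≤ p) (hp : p ≤ 2) : 0 < sKer p 1 := by
  have hc : (0:ℝ) < (1 - Real.cos 1) * 8⁻¹ := by
    have h1 : Real.cos 1 ≤ 2/3 := Real.cos_one_le.trans (by norm_num)
    norm_num; linarith
  have hbound : ∀ t ∈ Ioo (1:ℝ) 2,
      ENNReal.ofReal ((1 - Real.cos 1) * 8⁻¹)
        ≤ ENNReal.ofReal ((1 - Real.cos (1 * t)) * |t| ^ (-(1 + p))) := by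
    intro t ht
    obtain ⟨ht1, ht2⟩ := ht
    apply ENNReal.ofReal_le_ofReal
    have h0t : (0:ℝ) < t := by linarith
    have habs : |t| = t := abs_of_pos h0t
    have hcos : Real.cos t ≤ Real.cos 1 := by
      apply Real.cos_le_cos_of_nonneg_of_le_pi zero_le_one _ ht1.le
      nlinarith [Real.pi_gt_three]
    have hpow : (8:ℝ)⁻¹ ≤ t ^ (-(1+p)) := by
      rw [Real.rpow_neg h0t.le]
      apply inv_anti₀ (by positivity)
      calc t ^ (1+p) ≤ 2 ^ (1+p) := Real.rpow_le_rpow h0t.le ht2.le (by linarith)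
        _ ≤ 2 ^ (3:ℝ) := Real.rpow_le_rpow_of_exponent_le one_le_two (by linarith)
        _ = 8 := by
            rw [show (3:ℝ) = ((3:ℕ):ℝ) by norm_num, Real.rpow_natCast]; norm_num
    rw [one_mul, habs]
    have h1 : (0:ℝ) ≤ 1 - Real.cos t := by nlinarith [Real.cos_le_one t]
    calc (1 - Real.cos 1) * 8⁻¹ ≤ (1 - Real.cos t) * 8⁻¹ := by nlinarith
      _ ≤ (1 - Real.cos t) * t ^ (-(1+p)) := by nlinarith
  calc (0:ℝ≥0∞) < ENNReal.ofReal ((1 - Real.cos 1) * 8⁻¹) * volume (Ioo (1:ℝ) 2) := by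
        rw [Real.volume_Ioo]
        apply ENNReal.mul_pos (by simpa using hc) (by norm_num)
    _ = ∫⁻ _ in Ioo (1:ℝ) 2, ENNReal.ofReal ((1 - Real.cos 1) * 8⁻¹) := by
        rw [setLIntegral_const]
    _ ≤ ∫⁻ t in Ioo (1:ℝ) 2, ENNReal.ofReal ((1 - Real.cos (1*t)) * |t| ^ (-(1 + p))) := by
        apply setLIntegral_mono (by fun_prop) hbound
    _ ≤ sKer p 1 := setLIntegral_le_lintegral _ _

noncomputable def sPhi {Ω : Type} (p : ℝ) (u : Ω → ℝ) : Ω × ℝ → ℂ := fun z =>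
  (Complex.exp ((z.2 * u z.1 : ℝ) * Complex.I) - 1) * ((|z.2| ^ (-(1 + p) / 2) : ℝ) : ℂ)

lemma exp_diff_norm_sq (a b : ℝ) :
    ‖Complex.exp (a * Complex.I) - Complex.exp (b * Complex.I)‖ ^ (2:ℕ)
      = 2 * (1 - Real.cos (a - b)) := by
  rw [← Complex.normSq_eq_norm_sq]
  rw [Complex.normSq_apply]
  simp only [Complex.sub_re, Complex.sub_im, Complex.exp_ofReal_mul_I_re,
    Complex.exp_ofReal_mul_I_im]
  rw [Real.cos_sub]
  nlinarith [Real.sin_sq_add_cos_sq a, Real.sin_sq_add_cos_sq b]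

lemma sPhi_measurable {Ω : Type} [MeasurableSpace Ω] (p : ℝ) {u : Ω → ℝ}
    (hu : Measurable u) : Measurable (sPhi p u) := by
  unfold sPhi
  fun_prop

lemma sPhi_nnnorm_sq {Ω : Type} (p : ℝ) (u v : Ω → ℝ) (z : Ω × ℝ) :
    (‖sPhi p u z - sPhi p v z‖₊ : ℝ≥0∞) ^ (2:ℝ)
      = ENNReal.ofReal (2 * (1 - Real.cos (z.2 * (u z.1 - v z.1))) * |z.2| ^ (-(1 + p))) := by
  obtain ⟨ω, t⟩ := z
  have hc : (0:ℝ) ≤ |t| ^ (-(1+p)/2) := Real.rpow_nonneg (abs_nonneg t) _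
  have hdiff : sPhi p u (ω, t) - sPhi p v (ω, t)
      = (Complex.exp ((t * u ω : ℝ) * Complex.I) - Complex.exp ((t * v ω : ℝ) * Complex.I))
          * ((|t| ^ (-(1 + p) / 2) : ℝ) : ℂ) := by
    simp only [sPhi]; ring
  rw [hdiff, ← enorm_eq_nnnorm, ← ofReal_norm,
    ENNReal.ofReal_rpow_of_nonneg (norm_nonneg _) (by norm_num)]
  congr 1
  have h2 : ∀ x : ℝ, 0 ≤ x → x ^ (2:ℝ) = x ^ (2:ℕ) := fun x hx => by
    rw [← Real.rpow_natCast x 2]; norm_num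
  rw [h2 _ (norm_nonneg _), norm_mul, Complex.norm_real, Real.norm_of_nonneg hc, mul_pow,
    exp_diff_norm_sq]
  have hcsq : (|t| ^ (-(1+p)/2)) ^ (2:ℕ) = |t| ^ (-(1+p)) := by
    rw [← Real.rpow_natCast (|t| ^ (-(1+p)/2)) 2, ← Real.rpow_mul (abs_nonneg t)]
    norm_num
  rw [hcsq]
  ring_nf

/-- The key integral identity. -/
lemma sPhi_lintegral_sq {Ω : Type} [MeasurableSpace Ω] {μ : Measure Ω} {p : ℝ} (hp : 0 < p)
    {u v : Ω → ℝ} (hu : Measurable u) (hv : Measurable v) :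
    ∫⁻ z, (‖sPhi p u z - sPhi p v z‖₊ : ℝ≥0∞) ^ (2:ℝ) ∂(μ.prod volume)
      = 2 * sKer p 1 * ∫⁻ ω, ENNReal.ofReal (|u ω - v ω| ^ p) ∂μ := by
  have hrew : ∀ z : Ω × ℝ, (‖sPhi p u z - sPhi p v z‖₊ : ℝ≥0∞) ^ (2:ℝ)
      = 2 * ENNReal.ofReal ((1 - Real.cos (z.2 * (u z.1 - v z.1))) * |z.2| ^ (-(1 + p))) := by
    intro z
    rw [sPhi_nnnorm_sq, mul_assoc, ENNReal.ofReal_mul (by norm_num)]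
    norm_num
  have hmeas : Measurable fun z : Ω × ℝ =>
      ENNReal.ofReal ((1 - Real.cos (z.2 * (u z.1 - v z.1))) * |z.2| ^ (-(1 + p))) := by
    apply ENNReal.measurable_ofReal.comp
    apply Measurable.mul
    · exact measurable_const.sub (Real.continuous_cos.measurable.comp
        (measurable_snd.mul ((hu.comp measurable_fst).sub (hv.comp measurable_fst))))
    · fun_prop
  calc ∫⁻ z, (‖sPhi p u z - sPhi p v z‖₊ : ℝ≥0∞) ^ (2:ℝ) ∂(μ.prod volume)
      = ∫⁻ z, 2 * ENNReal.ofReal ((1 - Real.cos (z.2 * (u z.1 - v z.1)))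
          * |z.2| ^ (-(1 + p))) ∂(μ.prod volume) := lintegral_congr hrew
    _ = 2 * ∫⁻ z, ENNReal.ofReal ((1 - Real.cos (z.2 * (u z.1 - v z.1)))
          * |z.2| ^ (-(1 + p))) ∂(μ.prod volume) := lintegral_const_mul 2 hmeas
    _ = 2 * ∫⁻ ω, ∫⁻ t, ENNReal.ofReal ((1 - Real.cos (t * (u ω - v ω)))
          * |t| ^ (-(1 + p))) ∂volume ∂μ := by
        rw [lintegral_prod _ hmeas.aemeasurable]
    _ = 2 * ∫⁻ ω, ENNReal.ofReal (|u ω - v ω| ^ p) * sKer p 1 ∂μ := by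
        congr 1
        apply lintegral_congr fun ω => ?_
        have : ∀ t : ℝ, t * (u ω - v ω) = (u ω - v ω) * t := fun t => mul_comm _ _
        simp_rw [this]
        exact sKer_scale hp (u ω - v ω)
    _ = 2 * sKer p 1 * ∫⁻ ω, ENNReal.ofReal (|u ω - v ω| ^ p) ∂μ := by
        rw [mul_assoc]
        congr 1
        rw [lintegral_mul_const _ (by fun_prop : Measurable fun ω => ENNReal.ofReal (|u ω - v ω| ^ p)), mul_comm]

/-- Membership in L². -/
lemma sPhi_memLp {Ω : Type} [MeasurableSpace Ω] {μ : Measure Ω} {p : ℝ}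
    (hp1 : 1 ≤ p) (hp2 : p < 2) {u : Ω → ℝ} (hu : Measurable u)
    (hfin : ∫⁻ ω, ENNReal.ofReal (|u ω| ^ p) ∂μ < ∞) :
    MemLp (sPhi p u) 2 (μ.prod volume) := by
  have hp : 0 < p := lt_of_lt_of_le one_pos hp1
  constructor
  · exact (sPhi_measurable p hu).aestronglyMeasurable
  · have hzero : sPhi p (fun _ : Ω => (0:ℝ)) = fun _ => 0 := by
      funext z
      simp [sPhi]
    have h := sPhi_lintegral_sq (μ := μ) hp hu (measurable_const (a := (0:ℝ)))
    rw [hzero] at h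
    simp only [sub_zero] at h
    rw [eLpNorm_eq_lintegral_rpow_enorm_toReal (by norm_num) (by norm_num)]
    have h2 : ((2:ℝ≥0∞)).toReal = (2:ℝ) := by norm_num
    simp only [enorm_eq_nnnorm]
    rw [h2, h]
    apply ENNReal.rpow_lt_top_of_nonneg (by norm_num)
    apply ENNReal.mul_ne_top
    · exact ENNReal.mul_ne_top (by norm_num) (sKer_one_lt_top hp1 hp2).ne
    · exact hfin.ne

/-- For `1 ≤ p ≤ 2` and any measure space `(Ω, 𝓑, μ)`, there is a real
Hilbert space `H` and a map `S : L_p(μ) → H` with `‖S f - S g‖ = ‖f - g‖_p ^ (p/2)`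
for all `f, g ∈ L_p(μ)`. -/
theorem snowflake_embedding_of_Lp_into_Hilbert
    (p : ℝ) (hp1 : 1 ≤ p) (hp2 : p ≤ 2)
    {Ω : Type} [MeasurableSpace Ω] (μ : Measure Ω) :
    ∃ (H : Type) (_ : NormedAddCommGroup H) (_ : InnerProductSpace ℝ H)
      (_ : CompleteSpace H) (S : Lp ℝ (ENNReal.ofReal p) μ → H),
      ∀ f g : Lp ℝ (ENNReal.ofReal p) μ,
        ‖S f - S g‖ = ‖f - g‖ ^ (p / 2) := by
  rcases eq_or_lt_of_le hp2 with rfl | hplt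
  · -- p = 2 : identity embedding
    rw [show ENNReal.ofReal 2 = 2 by simp]
    refine ⟨Lp ℝ 2 μ, inferInstance, inferInstance, inferInstance, id, fun f g => ?_⟩
    norm_num
  · -- 1 ≤ p < 2 : snowflake embedding into L²(μ ⊗ λ; ℂ)
    have hp0 : (0:ℝ) < p := lt_of_lt_of_le one_pos hp1
    set q : ℝ≥0∞ := ENNReal.ofReal p with hq
    have hq0 : q ≠ 0 := by
      simp only [hq, ne_eq, ENNReal.ofReal_eq_zero, not_le]; linarith
    have hqtop : q ≠ ∞ := ENNReal.ofReal_ne_top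
    have hqr : q.toReal = p := ENNReal.toReal_ofReal hp0.le
    set ν : Measure (Ω × ℝ) := μ.prod volume with hν
    let u : Lp ℝ q μ → Ω → ℝ := fun f => (Lp.aestronglyMeasurable f).mk _
    have humeas : ∀ f, Measurable (u f) := fun f =>
      (Lp.aestronglyMeasurable f).stronglyMeasurable_mk.measurable
    have huae : ∀ f, (↑↑f : Ω → ℝ) =ᵐ[μ] u f := fun f => (Lp.aestronglyMeasurable f).ae_eq_mk
    have hfin : ∀ f : Lp ℝ q μ, ∫⁻ ω, ENNReal.ofReal (|u f ω| ^ p) ∂μ < ∞ := by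
      intro f
      have h1 : ∫⁻ ω, ENNReal.ofReal (|u f ω| ^ p) ∂μ
          = ∫⁻ ω, (‖(↑↑f : Ω → ℝ) ω‖₊ : ℝ≥0∞) ^ p ∂μ := by
        apply lintegral_congr_ae
        filter_upwards [huae f] with ω hω
        rw [← hω, ← enorm_eq_nnnorm, ← ofReal_norm,
          Real.norm_eq_abs, ENNReal.ofReal_rpow_of_nonneg (abs_nonneg _) hp0.le]
      rw [h1]
      have h2 := Lp.eLpNorm_lt_top f
      rw [eLpNorm_eq_lintegral_rpow_enorm_toReal hq0 hqtop, hqr] at h2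
      exact (ENNReal.rpow_lt_top_iff_of_pos (by positivity)).mp h2
    have hmem : ∀ f, MemLp (sPhi p (u f)) 2 ν := fun f =>
      sPhi_memLp hp1 hplt (humeas f) (hfin f)
    set T : ℝ := (2 * sKer p 1).toReal with hT
    have hTne : (2 : ℝ≥0∞) * sKer p 1 ≠ ∞ :=
      ENNReal.mul_ne_top (by norm_num) (sKer_one_lt_top hp1 hplt).ne
    have hTpos : 0 < T := ENNReal.toReal_pos
      (by
        apply mul_ne_zero (by norm_num)
        exact (sKer_one_pos hp1 hp2).ne') hTne
    set c : ℝ := T ^ (-(1/2) : ℝ) with hc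
    refine ⟨Lp ℂ 2 ν, inferInstance, InnerProductSpace.rclikeToReal ℂ _, inferInstance,
      fun f => c • (hmem f).toLp _, fun f g => ?_⟩
    set A : ℝ≥0∞ := ∫⁻ ω, ENNReal.ofReal (|u f ω - u g ω| ^ p) ∂μ with hA
    have hAeq : A = ∫⁻ ω, (‖(↑↑(f - g) : Ω → ℝ) ω‖₊ : ℝ≥0∞) ^ p ∂μ := by
      apply lintegral_congr_ae
      filter_upwards [huae f, huae g, Lp.coeFn_sub f g] with ω h1 h2 h3
      rw [h3, Pi.sub_apply, ← h1, ← h2, ← enorm_eq_nnnorm, ← ofReal_norm,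
        Real.norm_eq_abs, ENNReal.ofReal_rpow_of_nonneg (abs_nonneg _) hp0.le]
    have hAfin : A < ∞ := by
      rw [hAeq]
      have h2 := Lp.eLpNorm_lt_top (f - g)
      rw [eLpNorm_eq_lintegral_rpow_enorm_toReal hq0 hqtop, hqr] at h2
      exact (ENNReal.rpow_lt_top_iff_of_pos (by positivity)).mp h2
    have hnorm : ‖f - g‖ = A.toReal ^ (1/p) := by
      rw [Lp.norm_def, eLpNorm_eq_lintegral_rpow_enorm_toReal hq0 hqtop, hqr]
      simp only [enorm_eq_nnnorm]
      rw [← hAeq,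
        ← ENNReal.toReal_rpow]
    have hels : eLpNorm (sPhi p (u f) - sPhi p (u g)) 2 ν
        = (2 * sKer p 1 * A) ^ (1/2 : ℝ) := by
      rw [eLpNorm_eq_lintegral_rpow_enorm_toReal (by norm_num) (by norm_num)]
      have h2 : ((2:ℝ≥0∞)).toReal = (2:ℝ) := by norm_num
      rw [h2]
      congr 1
      have : ∀ z : Ω × ℝ, (sPhi p (u f) - sPhi p (u g)) z = sPhi p (u f) z - sPhi p (u g) z :=
        fun z => rfl
      simp_rw [this]
      exact sPhi_lintegral_sq hp0 (humeas f) (humeas g)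
    have hdiff : c • (hmem f).toLp _ - c • (hmem g).toLp _
        = c • (((hmem f).sub (hmem g)).toLp (sPhi p (u f) - sPhi p (u g))) := by
      rw [MemLp.toLp_sub, smul_sub]
    rw [hdiff, norm_smul, Lp.norm_toLp, hels]
    have hnormc : ‖c‖ = c := Real.norm_of_nonneg (Real.rpow_nonneg hTpos.le _)
    rw [hnormc, ← ENNReal.toReal_rpow, ENNReal.toReal_mul, ← hT]
    rw [Real.mul_rpow hTpos.le ENNReal.toReal_nonneg, hc]
    rw [show c * (T ^ (1/2:ℝ) * A.toReal ^ (1/2:ℝ))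
        = (c * T ^ (1/2:ℝ)) * A.toReal ^ (1/2:ℝ) by ring]
    have h1 : c * T ^ (1/2:ℝ) = 1 := by
      rw [hc, ← Real.rpow_add hTpos]; norm_num
    rw [h1, one_mul, hnorm, ← Real.rpow_mul ENNReal.toReal_nonneg]
    congr 1
    field_simp
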